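/- Let A, C ∈ ℝ^{n×n}, r ≥ ε ≥ 0, let Θ, λ > 0 satisfy |exp(At)| ≤ Θ e^{−λt} for all t ≥ 0, let σ ∈ (0, λ), let d, q : [0,∞) → [−1,1] be measurable, let x be a solution of system (2.12), and define v(t) := x(t−r) − x(t−r−εd(t)) for t ≥ 0. Then for all t ≥ r + ε: sup_{r+ε ≤ s ≤ t} (e^{σs}|v(s)|) ≤ e^{σ(r+ε)} (e^{|A|ε} − 1) · max_{0 ≤ s ≤ t−r} (e^{σs}|x(s)|) + Θ e^{σ(r+ε)} ((1 − e^{−(λ−σ)ε})/(λ−σ)) |C| · sup_{0 ≤ s ≤ t−r+ε} (e^{σs}|v(s)|). -/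

import Mathlib

open MeasureTheory

/-- Matrix-vector multiplication between Euclidean spaces. -/
noncomputable def mv {n m : ℕ} (A : Matrix (Fin n) (Fin m) ℝ)
    (x : EuclideanSpace ℝ (Fin m)) : EuclideanSpace ℝ (Fin n) :=
  Matrix.toEuclideanLin A x

/-- Operator norm of a matrix induced by the Euclidean vector norms. -/
noncomputable def opNorm {n m : ℕ} (A : Matrix (Fin n) (Fin m) ℝ) : ℝ :=
  ‖LinearMap.toContinuousLinearMap (Matrix.toEuclideanLin A)‖

/-- `mexp A t = exp (t A)`, the matrix exponential. -/
noncomputable def mexp {n : ℕ} (A : Matrix (Fin n) (Fin n) ℝ) (t : ℝ) :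
    Matrix (Fin n) (Fin n) ℝ :=
  NormedSpace.exp (t • A)

section Bridge
open scoped Matrix.Norms.L2Operator

lemma mv_eq {n : ℕ} (A : Matrix (Fin n) (Fin n) ℝ) (y : EuclideanSpace ℝ (Fin n)) :
    mv A y = Matrix.toEuclideanCLM (𝕜 := ℝ) A y := rfl

lemma opNorm_eq {n : ℕ} (A : Matrix (Fin n) (Fin n) ℝ) :
    opNorm A = ‖Matrix.toEuclideanCLM (𝕜 := ℝ) A‖ := rfl

lemma mexp_eq {n : ℕ} (A : Matrix (Fin n) (Fin n) ℝ) (t : ℝ) :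
    Matrix.toEuclideanCLM (𝕜 := ℝ) (mexp A t)
      = NormedSpace.exp (t • Matrix.toEuclideanCLM (𝕜 := ℝ) A) := by
  letI : NormedAlgebra ℚ (Matrix (Fin n) (Fin n) ℝ) := NormedAlgebra.restrictScalars ℚ ℝ _
  have h := NormedSpace.map_exp (Matrix.toEuclideanCLM (n := Fin n) (𝕜 := ℝ))
    (AddMonoidHomClass.continuous_of_bound _ 1 (fun M => by
      rw [one_mul, Matrix.cstar_norm_def])) (t • A)
  rw [_root_.map_smul] at h
  exact h
end Bridge

open scoped Nat

/-- interval integrability from a bound and measurability -/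
lemma II_of_bdd {n : ℕ} {f : ℝ → EuclideanSpace ℝ (Fin n)}
    (hf : AEStronglyMeasurable f volume) {α β : ℝ} (K : ℝ)
    (h : ∀ u ∈ Set.uIcc α β, ‖f u‖ ≤ K) : IntervalIntegrable f volume α β := by
  rw [intervalIntegrable_iff]
  refine Integrable.mono' (g := fun _ => K)
    (integrableOn_const measure_Ioc_lt_top.ne) hf.restrict ?_
  exact (ae_restrict_iff' measurableSet_uIoc).2
    (ae_of_all _ fun u hu => h u (Set.uIoc_subset_uIcc hu))

lemma norm_exp_sub_one_le' {𝔸 : Type*} [NormedRing 𝔸] [NormedAlgebra ℝ 𝔸] [CompleteSpace 𝔸]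
    (M : 𝔸) : ‖NormedSpace.exp M - 1‖ ≤ Real.exp ‖M‖ - 1 := by
  have h1 : HasSum (fun k : ℕ => (k !⁻¹ : ℝ) • M ^ k) (NormedSpace.exp M) :=
    NormedSpace.exp_series_hasSum_exp' (𝕂 := ℝ) M
  have hs : Summable (fun k : ℕ => (k !⁻¹ : ℝ) • M ^ k) := h1.summable
  have hsum : NormedSpace.exp M = 1 + ∑' k : ℕ, ((k + 1)!⁻¹ : ℝ) • M ^ (k + 1) := by
    rw [← h1.tsum_eq, hs.tsum_eq_zero_add]
    simp
  have hg : Summable (fun k : ℕ => ‖M‖ ^ k / k !) := Real.summable_pow_div_factorial ‖M‖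
  have hg1 : Summable (fun k : ℕ => ‖M‖ ^ (k + 1) / (k + 1)!) :=
    (summable_nat_add_iff 1).2 hg
  have hge : Real.exp ‖M‖ = 1 + ∑' k : ℕ, ‖M‖ ^ (k + 1) / (k + 1)! := by
    rw [Real.exp_eq_exp_ℝ, NormedSpace.exp_eq_tsum_div]
    dsimp only
    rw [hg.tsum_eq_zero_add]
    simp
  have hb : ∀ k : ℕ, ‖((k + 1)!⁻¹ : ℝ) • M ^ (k + 1)‖ ≤ ‖M‖ ^ (k + 1) / (k + 1)! := by
    intro k
    rw [norm_smul, Real.norm_eq_abs, abs_of_nonneg (by positivity), div_eq_inv_mul]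
    exact mul_le_mul_of_nonneg_left (norm_pow_le' M k.succ_pos) (by positivity)
  have hsn : Summable (fun k : ℕ => ‖((k + 1)!⁻¹ : ℝ) • M ^ (k + 1)‖) :=
    Summable.of_nonneg_of_le (fun k => norm_nonneg _) hb hg1
  calc ‖NormedSpace.exp M - 1‖ = ‖∑' k : ℕ, ((k + 1)!⁻¹ : ℝ) • M ^ (k + 1)‖ := by
        rw [hsum]; congr 1; abel
    _ ≤ ∑' k : ℕ, ‖((k + 1)!⁻¹ : ℝ) • M ^ (k + 1)‖ := norm_tsum_le_tsum_norm hsn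
    _ ≤ ∑' k : ℕ, ‖M‖ ^ (k + 1) / (k + 1)! := Summable.tsum_le_tsum hb hsn hg1
    _ = Real.exp ‖M‖ - 1 := by rw [hge]; ring

lemma exp_int {μ : ℝ} (hμ : 0 < μ) (c m : ℝ) :
    ∫ u in c..m, Real.exp (-μ * (m - u)) = (1 - Real.exp (-μ * (m - c))) / μ := by
  have hder : ∀ u ∈ Set.uIcc c m,
      HasDerivAt (fun w : ℝ => Real.exp (μ * (w - m)) / μ) (Real.exp (-μ * (m - u))) u := by
    intro u _
    have h1 : HasDerivAt (fun w : ℝ => μ * (w - m)) μ u := by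
      simpa using ((hasDerivAt_id u).sub_const m).const_mul μ
    have h2 := (Real.hasDerivAt_exp (μ * (u - m))).comp u h1
    have h3 := h2.div_const μ
    convert h3 using 1
    · rfl
    · rfl
    · rfl
    · rw [mul_div_cancel_right₀ _ hμ.ne']
      ring_nf
  have hcont : Continuous fun u : ℝ => Real.exp (-μ * (m - u)) := by continuity
  rw [intervalIntegral.integral_eq_sub_of_hasDerivAt hder (hcont.intervalIntegrable c m)]
  rw [show μ * (m - m) = 0 by ring, show μ * (c - m) = -μ * (m - c) by ring]
  simp [sub_div]

set_option maxHeartbeats 1000000 in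
set_option synthInstance.maxHeartbeats 1000000 in
open NormedSpace in
lemma var_const {n : ℕ} (T : EuclideanSpace ℝ (Fin n) →L[ℝ] EuclideanSpace ℝ (Fin n))
    (g y : ℝ → EuclideanSpace ℝ (Fin n)) {c m : ℝ} (hcm : c ≤ m)
    (hgm : Measurable g) (K : ℝ) (hgK : ∀ τ ∈ Set.Icc c m, ‖g τ‖ ≤ K)
    (hyc : Continuous y)
    (hy : ∀ u ∈ Set.Icc c m, y u - y c = ∫ τ in c..u, g τ) :
    y m - y c = (NormedSpace.exp ((m - c) • T)) (y c) - y c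
      + ∫ u in c..m, (NormedSpace.exp ((m - u) • T)) (g u - T (y u)) := by
  classical
  letI : NormedAlgebra ℚ (EuclideanSpace ℝ (Fin n) →L[ℝ] EuclideanSpace ℝ (Fin n)) :=
    NormedAlgebra.restrictScalars ℚ ℝ _
  set Ee : ℝ → (EuclideanSpace ℝ (Fin n) →L[ℝ] EuclideanSpace ℝ (Fin n)) :=
    fun τ => exp (τ • T) with hEe
  have hEcont : Continuous Ee := exp_continuous.comp (continuous_id.smul continuous_const)
  have hmul : ∀ p q : ℝ, Ee p * Ee q = Ee (p + q) := by
    intro p q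
    have hc : Commute (p • T) (q • T) := by
      refine ContinuousLinearMap.ext fun w => ?_
      simp only [ContinuousLinearMap.mul_apply, ContinuousLinearMap.smul_apply,
        ContinuousLinearMap.map_smul]
      rw [smul_comm]
    have h := exp_add_of_commute hc
    have h2 : p • T + q • T = (p + q) • T := (add_smul p q T).symm
    rw [h2] at h
    exact h.symm
  have happly : ∀ p q : ℝ, ∀ w, Ee p (Ee q w) = Ee (p + q) w := by
    intro p q w
    rw [← hmul p q]; rfl
  have hTE : ∀ (p : ℝ) (w), T (Ee p w) = Ee p (T w) := by
    intro p w
    have hc0 : Commute T (p • T) := by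
      refine ContinuousLinearMap.ext fun w => ?_
      simp only [ContinuousLinearMap.mul_apply, ContinuousLinearMap.smul_apply,
        ContinuousLinearMap.map_smul]
    have hc : Commute T (Ee p) := hc0.exp_right
    calc T (Ee p w) = (T * Ee p) w := rfl
      _ = (Ee p * T) w := by rw [hc]
      _ = Ee p (T w) := rfl
  have hderivE : ∀ (w : EuclideanSpace ℝ (Fin n)) (τ : ℝ),
      HasDerivAt (fun u : ℝ => Ee u w) (T (Ee τ w)) τ := by
    intro w τ
    have h1 : HasDerivAt (fun u : ℝ => exp (u • T)) (exp (τ • T) * T) τ :=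
      hasDerivAt_exp_smul_const T τ
    have h2 := h1.clm_apply (hasDerivAt_const τ w)
    have h3 : (exp (τ • T) * T) w + (exp (τ • T)) 0 = T (Ee τ w) := by
      rw [map_zero, add_zero, ContinuousLinearMap.mul_apply]
      exact (hTE τ w).symm
    rw [h3] at h2
    exact h2
  have happcont : ∀ w : EuclideanSpace ℝ (Fin n), Continuous fun u : ℝ => T (Ee (-u) w) := by
    intro w
    exact T.continuous.comp ((hEcont.comp continuous_neg).clm_apply continuous_const)
  have hFTC : ∀ (w : EuclideanSpace ℝ (Fin n)) (α β : ℝ),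
      (∫ u in α..β, T (Ee (-u) w)) = Ee (-α) w - Ee (-β) w := by
    intro w α β
    have hder : ∀ τ ∈ Set.uIcc α β,
        HasDerivAt (fun u : ℝ => -(Ee (-u) w)) (T (Ee (-τ) w)) τ := by
      intro τ _
      have h1 : HasDerivAt (fun u : ℝ => Ee (-u) w) ((-1 : ℝ) • T (Ee (-τ) w)) τ :=
        HasDerivAt.scomp τ (hderivE w (-τ)) (hasDerivAt_neg τ)
      simpa [Pi.neg_def] using h1.neg
    rw [intervalIntegral.integral_eq_sub_of_hasDerivAt hder
      ((happcont w).intervalIntegrable α β)]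
    abel
  -- basic bounds
  have hK0 : 0 ≤ K := le_trans (norm_nonneg _) (hgK c ⟨le_rfl, hcm⟩)
  obtain ⟨B, hB⟩ := (isCompact_Icc (a := c) (b := m)).exists_bound_of_continuousOn
    ((hEcont.comp continuous_neg).continuousOn)
  have hB0 : 0 ≤ B := le_trans (norm_nonneg _) (hB c ⟨le_rfl, hcm⟩)
  obtain ⟨Ky, hKy⟩ := (isCompact_Icc (a := c) (b := m)).exists_bound_of_continuousOn
    hyc.continuousOn
  -- integrability of g on subintervals
  have hgi : ∀ α β : ℝ, Set.uIcc α β ⊆ Set.Icc c m → IntervalIntegrable g volume α β :=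
    fun α β hsub => II_of_bdd hgm.aestronglyMeasurable K (fun u hu => hgK u (hsub hu))
  set F : ℝ → ℝ → EuclideanSpace ℝ (Fin n) := fun u τ => T (Ee (-u) (g τ)) with hF
  have hFm : Measurable (Function.uncurry F) := by
    have h1 : Measurable fun p : ℝ × ℝ =>
        ((Ee (-p.1), g p.2) : (EuclideanSpace ℝ (Fin n) →L[ℝ] EuclideanSpace ℝ (Fin n))
          × EuclideanSpace ℝ (Fin n)) :=
      (((hEcont.comp continuous_neg).comp continuous_fst).measurable).prodMk
        (hgm.comp measurable_snd)
    have h2 : Continuous fun q : (EuclideanSpace ℝ (Fin n) →L[ℝ] EuclideanSpace ℝ (Fin n))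
        × EuclideanSpace ℝ (Fin n) => T (q.1 q.2) :=
      T.continuous.comp isBoundedBilinearMap_apply.continuous
    exact h2.measurable.comp h1
  set H : ℝ → ℝ → EuclideanSpace ℝ (Fin n) :=
    fun u τ => if u ∈ Set.Icc c m ∧ τ ∈ Set.Icc c u then F u τ else 0 with hH
  set S : Set (ℝ × ℝ) := {p : ℝ × ℝ | p.1 ∈ Set.Icc c m ∧ p.2 ∈ Set.Icc c p.1} with hS
  have hSm : MeasurableSet S := by
    have : S = ({p : ℝ × ℝ | c ≤ p.1} ∩ {p : ℝ × ℝ | p.1 ≤ m})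
        ∩ ({p : ℝ × ℝ | c ≤ p.2} ∩ {p : ℝ × ℝ | p.2 ≤ p.1}) := by
      ext p
      exact Iff.rfl
    rw [this]
    exact ((measurableSet_le measurable_const measurable_fst).inter
      (measurableSet_le measurable_fst measurable_const)).inter
      ((measurableSet_le measurable_const measurable_snd).inter
      (measurableSet_le measurable_snd measurable_fst))
  have hHint : Integrable (Function.uncurry H) (volume.prod volume) := by
    have hHeq : Function.uncurry H = S.indicator (Function.uncurry F) := by
      funext p
      simp only [Function.uncurry, hH, hS, Set.indicator_apply, Set.mem_setOf_eq]
    rw [hHeq, integrable_indicator_iff hSm]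
    have hsub : S ⊆ Set.Icc c m ×ˢ Set.Icc c m := by
      rintro ⟨u, τ⟩ ⟨h1, h2⟩
      exact ⟨h1, ⟨h2.1, le_trans h2.2 h1.2⟩⟩
    refine Integrable.mono' (g := fun _ => ‖T‖ * (B * K))
      (integrableOn_const ?_) hFm.aestronglyMeasurable.restrict ?_
    · refine ne_of_lt ?_
      exact lt_of_le_of_lt (measure_mono hsub)
        (by rw [Measure.prod_prod]; exact ENNReal.mul_lt_top measure_Icc_lt_top measure_Icc_lt_top)
    · refine (ae_restrict_iff' hSm).2 (ae_of_all _ ?_)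
      rintro ⟨u, τ⟩ hp
      obtain ⟨h1, h2⟩ := hsub hp
      calc ‖F u τ‖ ≤ ‖T‖ * ‖Ee (-u) (g τ)‖ := T.le_opNorm _
        _ ≤ ‖T‖ * (‖Ee (-u)‖ * ‖g τ‖) :=
          mul_le_mul_of_nonneg_left ((Ee (-u)).le_opNorm _) (norm_nonneg T)
        _ ≤ ‖T‖ * (B * K) := by
          refine mul_le_mul_of_nonneg_left ?_ (norm_nonneg T)
          exact mul_le_mul (hB u h1) (hgK τ h2) (norm_nonneg _) hB0
  have hswap := MeasureTheory.integral_integral_swap hHint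
  -- evaluate left side
  have hL1 : ∀ u : ℝ, (∫ τ, H u τ)
      = Set.indicator (Set.Icc c m) (fun u' => T (Ee (-u') (y u' - y c))) u := by
    intro u
    by_cases hu : u ∈ Set.Icc c m
    · have h1 : (fun τ => H u τ) = Set.indicator (Set.Icc c u) (F u) := by
        funext τ
        simp only [hH, Set.indicator_apply]
        rw [if_congr (and_iff_right hu) rfl rfl]
      rw [h1, MeasureTheory.integral_indicator measurableSet_Icc,
        MeasureTheory.integral_Icc_eq_integral_Ioc,
        ← intervalIntegral.integral_of_le hu.1, Set.indicator_of_mem hu]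
      have h2 : IntervalIntegrable g volume c u := by
        refine hgi c u ?_
        rw [Set.uIcc_of_le hu.1]
        exact Set.Icc_subset_Icc le_rfl hu.2
      have h3 := (T.comp (Ee (-u))).intervalIntegral_comp_comm h2
      calc (∫ τ in c..u, F u τ) = (T.comp (Ee (-u))) (∫ τ in c..u, g τ) := h3
        _ = T (Ee (-u) (y u - y c)) := by rw [← hy u hu]; rfl
    · have h1 : ∀ τ, H u τ = 0 := fun τ => by
        simp only [hH]
        exact if_neg fun hcon => hu hcon.1
      simp only [h1, integral_zero, Set.indicator_of_notMem hu]
  have hL : (∫ u, ∫ τ, H u τ) = ∫ u in c..m, T (Ee (-u) (y u - y c)) := by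
    rw [show (fun u => ∫ τ, H u τ) = Set.indicator (Set.Icc c m)
        (fun u' => T (Ee (-u') (y u' - y c))) from funext hL1]
    rw [MeasureTheory.integral_indicator measurableSet_Icc,
      MeasureTheory.integral_Icc_eq_integral_Ioc, ← intervalIntegral.integral_of_le hcm]
  -- evaluate right side
  have hR1 : ∀ τ : ℝ, (∫ u, H u τ)
      = Set.indicator (Set.Icc c m) (fun τ' => Ee (-τ') (g τ') - Ee (-m) (g τ')) τ := by
    intro τ
    by_cases hτ : τ ∈ Set.Icc c m
    · have h1 : (fun u => H u τ) = Set.indicator (Set.Icc τ m) (fun u => F u τ) := by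
        funext u
        simp only [hH, Set.indicator_apply]
        refine if_congr ?_ rfl rfl
        simp only [Set.mem_Icc]
        constructor
        · rintro ⟨⟨_, h2⟩, _, h4⟩; exact ⟨h4, h2⟩
        · rintro ⟨h1', h2'⟩; exact ⟨⟨le_trans hτ.1 h1', h2'⟩, hτ.1, h1'⟩
      rw [h1, MeasureTheory.integral_indicator measurableSet_Icc,
        MeasureTheory.integral_Icc_eq_integral_Ioc,
        ← intervalIntegral.integral_of_le hτ.2, Set.indicator_of_mem hτ]
      exact hFTC (g τ) τ m
    · have h1 : ∀ u, H u τ = 0 := by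
        intro u
        simp only [hH, Set.mem_Icc]
        rw [if_neg]
        rintro ⟨⟨_, h2⟩, h3, h4⟩
        exact hτ ⟨h3, le_trans h4 h2⟩
      simp only [h1, integral_zero, Set.indicator_of_notMem hτ]
  have hR : (∫ τ, ∫ u, H u τ) = ∫ τ in c..m, (Ee (-τ) (g τ) - Ee (-m) (g τ)) := by
    rw [show (fun τ => ∫ u, H u τ) = Set.indicator (Set.Icc c m)
        (fun τ' => Ee (-τ') (g τ') - Ee (-m) (g τ')) from funext hR1]
    rw [MeasureTheory.integral_indicator measurableSet_Icc,
      MeasureTheory.integral_Icc_eq_integral_Ioc, ← intervalIntegral.integral_of_le hcm]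
  -- interval integrability of the four pieces
  have hucc : Set.uIcc c m = Set.Icc c m := Set.uIcc_of_le hcm
  have i1int : IntervalIntegrable (fun u => T (Ee (-u) (y u))) volume c m := by
    refine Continuous.intervalIntegrable ?_ c m
    exact T.continuous.comp ((hEcont.comp continuous_neg).clm_apply hyc)
  have i2int : IntervalIntegrable (fun u => T (Ee (-u) (y c))) volume c m :=
    ((happcont (y c))).intervalIntegrable c m
  have hgsm : ∀ w : ℝ → EuclideanSpace ℝ (Fin n), Measurable w →
      AEStronglyMeasurable (fun τ => Ee (-τ) (w τ)) volume := by
    intro w hw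
    have h1 : Measurable fun τ : ℝ =>
        ((Ee (-τ), w τ) : (EuclideanSpace ℝ (Fin n) →L[ℝ] EuclideanSpace ℝ (Fin n))
          × EuclideanSpace ℝ (Fin n)) :=
      ((hEcont.comp continuous_neg).measurable).prodMk hw
    exact (isBoundedBilinearMap_apply.continuous.measurable.comp h1).aestronglyMeasurable
  have i3int : IntervalIntegrable (fun τ => Ee (-τ) (g τ)) volume c m := by
    refine II_of_bdd (hgsm g hgm) (B * K) ?_
    intro u hu
    rw [hucc] at hu
    calc ‖Ee (-u) (g u)‖ ≤ ‖Ee (-u)‖ * ‖g u‖ := (Ee (-u)).le_opNorm _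
      _ ≤ B * K := mul_le_mul (hB u hu) (hgK u hu) (norm_nonneg _) hB0
  have i4int : IntervalIntegrable (fun τ => Ee (-m) (g τ)) volume c m := by
    refine II_of_bdd ((Ee (-m)).continuous.measurable.comp hgm).aestronglyMeasurable
      (‖Ee (-m)‖ * K) ?_
    intro u hu
    rw [hucc] at hu
    calc ‖Ee (-m) (g u)‖ ≤ ‖Ee (-m)‖ * ‖g u‖ := (Ee (-m)).le_opNorm _
      _ ≤ ‖Ee (-m)‖ * K := mul_le_mul_of_nonneg_left (hgK u hu) (norm_nonneg _)
  -- rewrite both sides of hswap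
  rw [hL, hR] at hswap
  have hLsplit : (∫ u in c..m, T (Ee (-u) (y u - y c)))
      = (∫ u in c..m, T (Ee (-u) (y u))) - (Ee (-c) (y c) - Ee (-m) (y c)) := by
    rw [← hFTC (y c) c m, ← intervalIntegral.integral_sub i1int i2int]
    refine intervalIntegral.integral_congr fun u _ => ?_
    rw [map_sub, map_sub]
  have hRsplit : (∫ τ in c..m, (Ee (-τ) (g τ) - Ee (-m) (g τ)))
      = (∫ τ in c..m, Ee (-τ) (g τ)) - (Ee (-m) (y m) - Ee (-m) (y c)) := by
    rw [intervalIntegral.integral_sub i3int i4int]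
    congr 1
    rw [(Ee (-m)).intervalIntegral_comp_comm (hgi c m (by rw [hucc])),
      ← hy m ⟨hcm, le_rfl⟩, map_sub]
  rw [hLsplit, hRsplit] at hswap
  -- isolate Ee (-m) (y m)
  have h7 : Ee (-m) (y m) = Ee (-c) (y c)
      + ((∫ τ in c..m, Ee (-τ) (g τ)) - ∫ u in c..m, T (Ee (-u) (y u))) := by
    rw [← sub_eq_zero]
    have h8 : Ee (-m) (y m) - (Ee (-c) (y c)
        + ((∫ τ in c..m, Ee (-τ) (g τ)) - ∫ u in c..m, T (Ee (-u) (y u))))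
        = ((∫ u in c..m, T (Ee (-u) (y u))) - (Ee (-c) (y c) - Ee (-m) (y c)))
          - ((∫ τ in c..m, Ee (-τ) (g τ)) - (Ee (-m) (y m) - Ee (-m) (y c))) := by
      abel
    rw [h8, hswap, sub_self]
  have h10 : (∫ τ in c..m, Ee (-τ) (g τ)) - (∫ u in c..m, T (Ee (-u) (y u)))
      = ∫ u in c..m, Ee (-u) (g u - T (y u)) := by
    rw [← intervalIntegral.integral_sub i3int i1int]
    refine intervalIntegral.integral_congr fun u _ => ?_
    rw [map_sub, ← hTE]
  rw [h10] at h7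
  -- apply Ee m
  have hfint : IntervalIntegrable (fun u => Ee (-u) (g u - T (y u))) volume c m := by
    refine II_of_bdd (hgsm _ (hgm.sub (T.continuous.measurable.comp hyc.measurable)))
      (B * (K + ‖T‖ * Ky)) ?_
    intro u hu
    rw [hucc] at hu
    calc ‖Ee (-u) (g u - T (y u))‖ ≤ ‖Ee (-u)‖ * ‖g u - T (y u)‖ := (Ee (-u)).le_opNorm _
      _ ≤ B * (K + ‖T‖ * Ky) := by
        refine mul_le_mul (hB u hu) ?_ (norm_nonneg _) hB0
        calc ‖g u - T (y u)‖ ≤ ‖g u‖ + ‖T (y u)‖ := norm_sub_le _ _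
          _ ≤ K + ‖T‖ * Ky := by
            refine add_le_add (hgK u hu) ?_
            exact le_trans (T.le_opNorm _)
              (mul_le_mul_of_nonneg_left (hKy u hu) (norm_nonneg T))
  have h11 := congrArg (fun w => Ee m w) h7
  simp only [map_add] at h11
  rw [happly m (-m), happly m (-c)] at h11
  rw [show m + -m = (0 : ℝ) by ring] at h11
  rw [show m + -c = m - c by ring] at h11
  rw [show Ee 0 = 1 from by
    have hz : (0:ℝ) • T = 0 := zero_smul ℝ T
    show exp ((0:ℝ) • T) = 1
    rw [hz, exp_zero]] at h11
  rw [ContinuousLinearMap.one_apply] at h11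
  rw [← (Ee m).intervalIntegral_comp_comm hfint] at h11
  have h12 : (∫ u in c..m, Ee m (Ee (-u) (g u - T (y u))))
      = ∫ u in c..m, Ee (m - u) (g u - T (y u)) := by
    refine intervalIntegral.integral_congr fun u _ => ?_
    rw [happly m (-u), show m + -u = m - u by ring]
  rw [h12] at h11
  rw [h11]
  abel

set_option maxHeartbeats 2000000 in
set_option synthInstance.maxHeartbeats 1000000 in
theorem stmt_14 (n : ℕ) (A C : Matrix (Fin n) (Fin n) ℝ)
    (r ε Θ lam σ : ℝ) (hε : 0 ≤ ε) (hεr : ε ≤ r) (hΘ : 0 < Θ) (hlam : 0 < lam)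
    (hdecay : ∀ t : ℝ, 0 ≤ t → opNorm (mexp A t) ≤ Θ * Real.exp (-lam * t))
    (hσ : σ ∈ Set.Ioo 0 lam)
    (d q : ℝ → ℝ) (hd : Measurable d) (hd1 : ∀ t, 0 ≤ t → d t ∈ Set.Icc (-1 : ℝ) 1)
    (hq : Measurable q) (hq1 : ∀ t, 0 ≤ t → q t ∈ Set.Icc (-1 : ℝ) 1)
    (x : ℝ → EuclideanSpace ℝ (Fin n))
    (hxc : ContinuousOn x (Set.Ici (-(r + ε))))
    (hxode : ∀ t : ℝ, 0 ≤ t →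
      x t = x 0 + ∫ s in (0 : ℝ)..t,
        (mv A (x s) + q s • mv C (x (s - r - ε * d s) - x (s - r))))
    (v : ℝ → EuclideanSpace ℝ (Fin n))
    (hv : ∀ t : ℝ, 0 ≤ t → v t = x (t - r) - x (t - r - ε * d t)) :
    ∀ t : ℝ, r + ε ≤ t →
      sSup ((fun s => Real.exp (σ * s) * ‖v s‖) '' Set.Icc (r + ε) t) ≤
        Real.exp (σ * (r + ε)) * (Real.exp (opNorm A * ε) - 1) *
          sSup ((fun s => Real.exp (σ * s) * ‖x s‖) '' Set.Icc 0 (t - r)) +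
        Θ * Real.exp (σ * (r + ε)) *
          ((1 - Real.exp (-(lam - σ) * ε)) / (lam - σ)) * opNorm C *
          sSup ((fun s => Real.exp (σ * s) * ‖v s‖) '' Set.Icc 0 (t - r + ε)) := by
  obtain ⟨hσ0, hσlam⟩ := hσ
  intro t ht
  have hμ : 0 < lam - σ := by linarith
  have hr0 : 0 ≤ r := le_trans hε hεr
  have hrε0 : 0 ≤ r + ε := by linarith
  have ht0 : 0 ≤ t := le_trans hrε0 ht
  set TA := Matrix.toEuclideanCLM (𝕜 := ℝ) A with hTAdef
  set TC := Matrix.toEuclideanCLM (𝕜 := ℝ) C with hTCdef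
  set x' : ℝ → EuclideanSpace ℝ (Fin n) := fun u => x (max u (-(r + ε))) with hx'def
  have hx'c : Continuous x' := ContinuousOn.comp_continuous hxc
    (continuous_id.max continuous_const) fun u => Set.mem_Ici.2 (le_max_right _ _)
  have hx'eq : ∀ u : ℝ, -(r + ε) ≤ u → x' u = x u := by
    intro u hu
    show x (max u (-(r + ε))) = x u
    rw [max_eq_left hu]
  have hd1' : ∀ u, 0 ≤ u → -1 ≤ d u := fun u hu => (hd1 u hu).1
  have hd2' : ∀ u, 0 ≤ u → d u ≤ 1 := fun u hu => (hd1 u hu).2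
  have hq1' : ∀ u, 0 ≤ u → |q u| ≤ 1 := fun u hu => abs_le.2 (hq1 u hu)
  have hargs : ∀ u : ℝ, 0 ≤ u →
      u - r - ε ≤ u - r - ε * d u ∧ u - r - ε * d u ≤ u - r + ε := by
    intro u hu
    constructor
    · nlinarith [hd2' u hu]
    · nlinarith [hd1' u hu]
  set g' : ℝ → EuclideanSpace ℝ (Fin n) :=
    fun u => TA (x' u) + q u • TC (x' (u - r - ε * d u) - x' (u - r)) with hg'def
  have hgeq : ∀ u : ℝ, 0 ≤ u →
      mv A (x u) + q u • mv C (x (u - r - ε * d u) - x (u - r)) = g' u := by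
    intro u hu
    have e1 : x' u = x u := hx'eq u (by linarith)
    have e2 : x' (u - r - ε * d u) = x (u - r - ε * d u) :=
      hx'eq _ (le_trans (by linarith) (hargs u hu).1)
    have e3 : x' (u - r) = x (u - r) := hx'eq _ (by linarith)
    show _ = TA (x' u) + q u • TC (x' (u - r - ε * d u) - x' (u - r))
    rw [e1, e2, e3, mv_eq, mv_eq, hTAdef, hTCdef]
  have hode' : ∀ u : ℝ, 0 ≤ u → x' u - x' 0 = ∫ s in (0 : ℝ)..u, g' s := by
    intro u hu
    rw [hx'eq u (by linarith), hx'eq 0 (by linarith), hxode u hu, add_sub_cancel_left]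
    refine intervalIntegral.integral_congr fun s hs => ?_
    rw [Set.uIcc_of_le hu] at hs
    exact hgeq s hs.1
  have hg'm : Measurable g' := by
    have h1 : Measurable fun u : ℝ => TA (x' u) := (TA.continuous.comp hx'c).measurable
    have hφ : Measurable fun u : ℝ => u - r - ε * d u :=
      (measurable_id.sub measurable_const).sub (hd.const_mul ε)
    have h2 : Measurable fun u : ℝ => TC (x' (u - r - ε * d u) - x' (u - r)) :=
      TC.continuous.measurable.comp
        (((hx'c.measurable).comp hφ).sub
          ((hx'c.measurable).comp (measurable_id.sub measurable_const)))
    exact h1.add (hq.smul h2)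
  obtain ⟨K0, hK0b⟩ := (isCompact_Icc (a := -(r + ε)) (b := t)).exists_bound_of_continuousOn
    hx'c.continuousOn
  have hK00 : 0 ≤ K0 := le_trans (norm_nonneg _) (hK0b (-(r + ε)) ⟨le_rfl, by linarith⟩)
  have hxmem : ∀ u : ℝ, 0 ≤ u → u ≤ t →
      (u - r - ε * d u) ∈ Set.Icc (-(r + ε)) t ∧ (u - r) ∈ Set.Icc (-(r + ε)) t
        ∧ u ∈ Set.Icc (-(r + ε)) t := by
    intro u hu hut
    obtain ⟨ha1, ha2⟩ := hargs u hu
    refine ⟨⟨by linarith, by linarith⟩, ⟨by linarith, by linarith⟩, ⟨by linarith, hut⟩⟩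
  set KG := ‖TA‖ * K0 + ‖TC‖ * (2 * K0) with hKG
  have hg'b : ∀ u ∈ Set.Icc (0 : ℝ) t, ‖g' u‖ ≤ KG := by
    intro u hu
    obtain ⟨m1, m2, m3⟩ := hxmem u hu.1 hu.2
    have hb1 : ‖TA (x' u)‖ ≤ ‖TA‖ * K0 :=
      le_trans (TA.le_opNorm _) (mul_le_mul_of_nonneg_left (hK0b u m3) (norm_nonneg _))
    have hb2 : ‖TC (x' (u - r - ε * d u) - x' (u - r))‖ ≤ ‖TC‖ * (2 * K0) := by
      refine le_trans (TC.le_opNorm _) (mul_le_mul_of_nonneg_left ?_ (norm_nonneg _))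
      calc ‖x' (u - r - ε * d u) - x' (u - r)‖
          ≤ ‖x' (u - r - ε * d u)‖ + ‖x' (u - r)‖ := norm_sub_le _ _
        _ ≤ 2 * K0 := by
            have := hK0b _ m1
            have := hK0b _ m2
            linarith
    calc ‖g' u‖ ≤ ‖TA (x' u)‖ + ‖q u • TC (x' (u - r - ε * d u) - x' (u - r))‖ :=
          norm_add_le _ _
      _ ≤ KG := by
          rw [hKG]
          refine add_le_add hb1 ?_
          rw [norm_smul, Real.norm_eq_abs]
          calc |q u| * ‖TC (x' (u - r - ε * d u) - x' (u - r))‖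
              ≤ 1 * (‖TC‖ * (2 * K0)) :=
                mul_le_mul (hq1' u hu.1) hb2 (norm_nonneg _) zero_le_one
            _ = ‖TC‖ * (2 * K0) := one_mul _
  have hg'int : ∀ α β : ℝ, Set.uIcc α β ⊆ Set.Icc 0 t → IntervalIntegrable g' volume α β :=
    fun α β hsub => II_of_bdd hg'm.aestronglyMeasurable KG fun u hu => hg'b u (hsub hu)
  -- the two sSup quantities
  have hXbdd : BddAbove ((fun s => Real.exp (σ * s) * ‖x s‖) '' Set.Icc 0 (t - r)) := by
    refine IsCompact.bddAbove_image isCompact_Icc ?_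
    refine ContinuousOn.mul
      (Real.continuous_exp.comp (continuous_const.mul continuous_id)).continuousOn ?_
    exact (hxc.mono fun z hz => le_trans (by linarith) hz.1).norm
  have hXnn : 0 ≤ sSup ((fun s => Real.exp (σ * s) * ‖x s‖) '' Set.Icc 0 (t - r)) := by
    refine Real.sSup_nonneg ?_
    rintro yy ⟨w, _, rfl⟩
    positivity
  have hxleX : ∀ w ∈ Set.Icc (0 : ℝ) (t - r), Real.exp (σ * w) * ‖x w‖ ≤
      sSup ((fun s => Real.exp (σ * s) * ‖x s‖) '' Set.Icc 0 (t - r)) :=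
    fun w hw => le_csSup hXbdd ⟨w, hw, rfl⟩
  have hVbdd : BddAbove ((fun s => Real.exp (σ * s) * ‖v s‖) '' Set.Icc 0 (t - r + ε)) := by
    refine ⟨Real.exp (σ * (t - r + ε)) * (2 * K0), ?_⟩
    rintro yy ⟨w, hw, rfl⟩
    have hw0 : 0 ≤ w := hw.1
    obtain ⟨ha1, ha2⟩ := hargs w hw0
    have hm1 : (w - r) ∈ Set.Icc (-(r + ε)) t := ⟨by linarith, by linarith [hw.2]⟩
    have hm2 : (w - r - ε * d w) ∈ Set.Icc (-(r + ε)) t := ⟨by linarith, by linarith [hw.2]⟩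
    have hvw : ‖v w‖ ≤ 2 * K0 := by
      rw [hv w hw0, ← hx'eq _ hm1.1, ← hx'eq _ hm2.1]
      calc ‖x' (w - r) - x' (w - r - ε * d w)‖
          ≤ ‖x' (w - r)‖ + ‖x' (w - r - ε * d w)‖ := norm_sub_le _ _
        _ ≤ 2 * K0 := by
            have := hK0b _ hm1
            have := hK0b _ hm2
            linarith
    refine mul_le_mul (Real.exp_le_exp.2 (mul_le_mul_of_nonneg_left hw.2 hσ0.le)) hvw
      (norm_nonneg _) (Real.exp_pos _).le
  have hVnn : 0 ≤ sSup ((fun s => Real.exp (σ * s) * ‖v s‖) '' Set.Icc 0 (t - r + ε)) := by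
    refine Real.sSup_nonneg ?_
    rintro yy ⟨w, _, rfl⟩
    positivity
  have hvleV : ∀ w ∈ Set.Icc (0 : ℝ) (t - r + ε), Real.exp (σ * w) * ‖v w‖ ≤
      sSup ((fun s => Real.exp (σ * s) * ‖v s‖) '' Set.Icc 0 (t - r + ε)) :=
    fun w hw => le_csSup hVbdd ⟨w, hw, rfl⟩
  set X := sSup ((fun s => Real.exp (σ * s) * ‖x s‖) '' Set.Icc 0 (t - r))
  set V := sSup ((fun s => Real.exp (σ * s) * ‖v s‖) '' Set.Icc 0 (t - r + ε))
  have hopA : opNorm A = ‖TA‖ := by rw [opNorm_eq, hTAdef]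
  have hopC : opNorm C = ‖TC‖ := by rw [opNorm_eq, hTCdef]
  have hdecay' : ∀ τ : ℝ, 0 ≤ τ →
      ‖NormedSpace.exp (τ • TA)‖ ≤ Θ * Real.exp (-lam * τ) := by
    intro τ hτ
    have h := hdecay τ hτ
    rw [opNorm_eq (mexp A τ), mexp_eq] at h
    rw [hTAdef]
    exact h
  have hexp1 : 0 ≤ Real.exp (opNorm A * ε) - 1 := by
    have : (0 : ℝ) ≤ opNorm A * ε := by
      rw [hopA]; positivity
    nlinarith [Real.add_one_le_exp (opNorm A * ε)]
  have hexp2 : 0 ≤ (1 - Real.exp (-(lam - σ) * ε)) / (lam - σ) := by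
    refine div_nonneg ?_ hμ.le
    have : -(lam - σ) * ε ≤ 0 := by nlinarith
    nlinarith [Real.exp_le_one_iff.2 this]
  -- pointwise bound
  have hopC0 : 0 ≤ opNorm C := by rw [hopC]; exact norm_nonneg _
  refine Real.sSup_le ?_ (add_nonneg
    (mul_nonneg (mul_nonneg (Real.exp_pos _).le hexp1) hXnn)
    (mul_nonneg (mul_nonneg (mul_nonneg (mul_nonneg hΘ.le (Real.exp_pos _).le) hexp2) hopC0)
      hVnn))
  rintro yy ⟨s, hs, rfl⟩
  have hs1 : r + ε ≤ s := hs.1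
  have hs2 : s ≤ t := hs.2
  have hs0 : 0 ≤ s := le_trans hrε0 hs1
  set a := s - r - ε * d s with hadef
  set b := s - r with hbdef
  obtain ⟨haL, haU⟩ := hargs s hs0
  set cc := min a b with hccdef
  set mm := max a b with hmmdef
  have hccm : cc ≤ mm := min_le_max
  have hcc0 : 0 ≤ cc := le_min (by rw [hadef]; linarith) (by rw [hbdef]; linarith)
  have hccb : cc ≤ t - r := le_trans (min_le_right a b) (by rw [hbdef]; linarith)
  have hccl : s - r - ε ≤ cc := le_min (by rw [hadef]; linarith) (by rw [hbdef]; linarith)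
  have hmmu : mm ≤ s - r + ε := max_le (by rw [hadef]; linarith) (by rw [hbdef]; linarith)
  have hmmt : mm ≤ t - r + ε := le_trans hmmu (by linarith)
  have hmmtt : mm ≤ t := le_trans hmmu (by linarith)
  have hmc : mm - cc ≤ ε := by
    have habs : |a - b| ≤ ε := by
      rw [hadef, hbdef, show s - r - ε * d s - (s - r) = -(ε * d s) by ring, abs_neg, abs_mul,
        abs_of_nonneg hε]
      calc ε * |d s| ≤ ε * 1 := mul_le_mul_of_nonneg_left (abs_le.2 (hd1 s hs0)) hε
        _ = ε := mul_one ε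
    rcases le_total a b with h | h
    · rw [hccdef, hmmdef, min_eq_left h, max_eq_right h]
      rw [abs_sub_comm] at habs
      calc b - a ≤ |b - a| := le_abs_self _
        _ ≤ ε := habs
    · rw [hccdef, hmmdef, min_eq_right h, max_eq_left h]
      calc a - b ≤ |a - b| := le_abs_self _
        _ ≤ ε := habs
  have hyint : ∀ u ∈ Set.Icc cc mm, x' u - x' cc = ∫ τ in cc..u, g' τ := by
    intro u hu
    have hu0 : 0 ≤ u := le_trans hcc0 hu.1
    have hut : u ≤ t := le_trans hu.2 hmmtt
    have h1 := hode' u hu0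
    have h2 := hode' cc hcc0
    have h3 : x' u - x' cc = (∫ τ in (0:ℝ)..u, g' τ) - ∫ τ in (0:ℝ)..cc, g' τ := by
      rw [← h1, ← h2]; abel
    rw [h3]
    exact intervalIntegral.integral_interval_sub_left
      (hg'int 0 u (by rw [Set.uIcc_of_le hu0]; exact Set.Icc_subset_Icc le_rfl hut))
      (hg'int 0 cc (by rw [Set.uIcc_of_le hcc0]
                       exact Set.Icc_subset_Icc le_rfl (le_trans hccb (by linarith))))
  have hvc := var_const TA g' x' hccm hg'm KG
    (fun τ hτ => hg'b τ ⟨le_trans hcc0 hτ.1, le_trans hτ.2 hmmtt⟩) hx'c hyint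
  have hvs_eq : ‖v s‖ = ‖x' mm - x' cc‖ := by
    have hb1 : -(r + ε) ≤ b := by rw [hbdef]; linarith
    have ha1 : -(r + ε) ≤ a := by rw [hadef]; linarith
    have h0 : v s = x' b - x' a := by
      rw [hv s hs0, hx'eq b hb1, hx'eq a ha1]
    rcases le_total a b with hab | hab
    · rw [h0, hmmdef, hccdef, max_eq_right hab, min_eq_left hab]
    · rw [h0, hmmdef, hccdef, max_eq_left hab, min_eq_right hab, norm_sub_rev]
  -- first term bound
  have hxcc : Real.exp (σ * s) * ‖x' cc‖ ≤ Real.exp (σ * (r + ε)) * X := by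
    rw [hx'eq cc (by linarith)]
    have e1 : Real.exp (σ * s) = Real.exp (σ * (s - cc)) * Real.exp (σ * cc) := by
      rw [← Real.exp_add]; congr 1; ring
    rw [e1, mul_assoc]
    refine mul_le_mul (Real.exp_le_exp.2 ?_) (hxleX cc ⟨hcc0, hccb⟩) (by positivity)
      (Real.exp_pos _).le
    nlinarith
  have hterm1 : Real.exp (σ * s) *
      ‖(NormedSpace.exp ((mm - cc) • TA)) (x' cc) - x' cc‖
      ≤ Real.exp (σ * (r + ε)) * (Real.exp (opNorm A * ε) - 1) * X := by
    have h1 : (NormedSpace.exp ((mm - cc) • TA)) (x' cc) - x' cc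
        = (NormedSpace.exp ((mm - cc) • TA) - 1) (x' cc) := by
      rw [ContinuousLinearMap.sub_apply, ContinuousLinearMap.one_apply]
    have h2 : ‖(NormedSpace.exp ((mm - cc) • TA) - 1) (x' cc)‖
        ≤ (Real.exp (opNorm A * ε) - 1) * ‖x' cc‖ := by
      refine le_trans ((NormedSpace.exp ((mm - cc) • TA) - 1).le_opNorm _) ?_
      refine mul_le_mul_of_nonneg_right ?_ (norm_nonneg _)
      refine le_trans (norm_exp_sub_one_le' _) ?_
      have h3 : ‖(mm - cc) • TA‖ ≤ ‖TA‖ * ε := by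
        refine le_trans (ContinuousLinearMap.opNorm_smul_le _ _) ?_
        rw [Real.norm_eq_abs, abs_of_nonneg (sub_nonneg.2 hccm)]
        nlinarith [norm_nonneg TA]
      rw [hopA]
      exact sub_le_sub_right (Real.exp_le_exp.2 h3) 1
    rw [h1]
    calc Real.exp (σ * s) * ‖(NormedSpace.exp ((mm - cc) • TA) - 1) (x' cc)‖
        ≤ Real.exp (σ * s) * ((Real.exp (opNorm A * ε) - 1) * ‖x' cc‖) :=
          mul_le_mul_of_nonneg_left h2 (Real.exp_pos _).le
      _ = (Real.exp (opNorm A * ε) - 1) * (Real.exp (σ * s) * ‖x' cc‖) := by ring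
      _ ≤ (Real.exp (opNorm A * ε) - 1) * (Real.exp (σ * (r + ε)) * X) :=
          mul_le_mul_of_nonneg_left hxcc hexp1
      _ = Real.exp (σ * (r + ε)) * (Real.exp (opNorm A * ε) - 1) * X := by ring
  -- second term bound
  set φb : ℝ → ℝ := fun u => Θ * ‖TC‖ * V * Real.exp (-σ * mm) * Real.exp (-(lam - σ) * (mm - u))
    with hφbdef
  have hf'eq : ∀ u : ℝ, g' u - TA (x' u) = q u • TC (x' (u - r - ε * d u) - x' (u - r)) := by
    intro u
    show TA (x' u) + q u • TC (x' (u - r - ε * d u) - x' (u - r)) - TA (x' u) = _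
    rw [add_sub_cancel_left]
  have hptw : ∀ u ∈ Set.Ioc cc mm,
      ‖(NormedSpace.exp ((mm - u) • TA)) (g' u - TA (x' u))‖ ≤ φb u := by
    intro u hu
    have hu0 : 0 ≤ u := le_trans hcc0 hu.1.le
    have humm : u ≤ mm := hu.2
    obtain ⟨hb1, hb2⟩ := hargs u hu0
    have hf'v : ‖g' u - TA (x' u)‖ ≤ ‖TC‖ * ‖v u‖ := by
      rw [hf'eq u]
      have hveq : x' (u - r - ε * d u) - x' (u - r) = -(v u) := by
        rw [hv u hu0, hx'eq _ (by linarith : -(r+ε) ≤ u - r - ε * d u),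
          hx'eq _ (by linarith : -(r+ε) ≤ u - r)]
        abel
      rw [hveq, map_neg, smul_neg, norm_neg, norm_smul, Real.norm_eq_abs]
      calc |q u| * ‖TC (v u)‖ ≤ 1 * (‖TC‖ * ‖v u‖) :=
            mul_le_mul (hq1' u hu0) (TC.le_opNorm _) (norm_nonneg _) zero_le_one
        _ = ‖TC‖ * ‖v u‖ := one_mul _
    have hvV : ‖v u‖ ≤ Real.exp (-σ * u) * V := by
      have h5 := hvleV u ⟨hu0, le_trans humm hmmt⟩
      have h6 : Real.exp (-σ * u) * (Real.exp (σ * u) * ‖v u‖)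
          ≤ Real.exp (-σ * u) * V := mul_le_mul_of_nonneg_left h5 (Real.exp_pos _).le
      calc ‖v u‖ = Real.exp (-σ * u) * (Real.exp (σ * u) * ‖v u‖) := by
            rw [← mul_assoc, ← Real.exp_add, show -σ * u + σ * u = 0 by ring,
              Real.exp_zero, one_mul]
        _ ≤ Real.exp (-σ * u) * V := h6
    calc ‖(NormedSpace.exp ((mm - u) • TA)) (g' u - TA (x' u))‖
        ≤ ‖NormedSpace.exp ((mm - u) • TA)‖ * ‖g' u - TA (x' u)‖ :=
          ContinuousLinearMap.le_opNorm _ _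
      _ ≤ (Θ * Real.exp (-lam * (mm - u))) * (‖TC‖ * (Real.exp (-σ * u) * V)) := by
          refine mul_le_mul (hdecay' (mm - u) (by linarith)) ?_ (norm_nonneg _) ?_
          · exact le_trans hf'v (mul_le_mul_of_nonneg_left hvV (norm_nonneg _))
          · positivity
      _ = Θ * ‖TC‖ * V * (Real.exp (-lam * (mm - u)) * Real.exp (-σ * u)) := by ring
      _ = φb u := by
          rw [hφbdef]
          have h7 : Real.exp (-lam * (mm - u)) * Real.exp (-σ * u)
              = Real.exp (-σ * mm) * Real.exp (-(lam - σ) * (mm - u)) := by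
            rw [← Real.exp_add, ← Real.exp_add]
            congr 1
            ring
          rw [h7]
          ring
  have hφcont : Continuous φb := by
    apply continuous_const.mul
    exact Real.continuous_exp.comp (continuous_const.mul (continuous_const.sub continuous_id))
  have hφval : (∫ u in cc..mm, φb u)
      = Θ * ‖TC‖ * V * Real.exp (-σ * mm) * ((1 - Real.exp (-(lam - σ) * (mm - cc))) / (lam - σ)) := by
    rw [show (fun u => φb u) = fun u => (Θ * ‖TC‖ * V * Real.exp (-σ * mm))
        * Real.exp (-(lam - σ) * (mm - u)) from funext fun u => by rw [hφbdef]]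
    rw [intervalIntegral.integral_const_mul, exp_int hμ]
  have hIbound : ‖∫ u in cc..mm, (NormedSpace.exp ((mm - u) • TA)) (g' u - TA (x' u))‖
      ≤ Θ * ‖TC‖ * V * Real.exp (-σ * mm) * ((1 - Real.exp (-(lam - σ) * ε)) / (lam - σ)) := by
    have h8 := intervalIntegral.norm_integral_le_of_norm_le (μ := volume)
      (f := fun u => (NormedSpace.exp ((mm - u) • TA)) (g' u - TA (x' u)))
      (g := φb) (a := cc) (b := mm) hccm ?_ (hφcont.intervalIntegrable cc mm)
    · refine le_trans h8 ?_
      have hc1 : (0 : ℝ) ≤ Θ * ‖TC‖ * V * Real.exp (-σ * mm) :=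
        mul_nonneg (mul_nonneg (mul_nonneg hΘ.le (norm_nonneg _)) hVnn) (Real.exp_pos _).le
      have hc2 : 0 ≤ (1 - Real.exp (-(lam - σ) * (mm - cc))) / (lam - σ) := by
        refine div_nonneg ?_ hμ.le
        have h9 : -(lam - σ) * (mm - cc) ≤ 0 := by nlinarith
        nlinarith [Real.exp_le_one_iff.2 h9]
      rw [hφval]
      refine mul_le_mul_of_nonneg_left ?_ hc1
      have h9 : Real.exp (-(lam - σ) * ε) ≤ Real.exp (-(lam - σ) * (mm - cc)) :=
        Real.exp_le_exp.2 (by nlinarith)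
      exact (div_le_div_iff_of_pos_right hμ).2 (by linarith)
    · rw [← ae_restrict_iff' measurableSet_Ioc]
      exact (ae_restrict_iff' measurableSet_Ioc).2 (ae_of_all _ fun u hu => hptw u hu)
  have hterm2 : Real.exp (σ * s) *
      ‖∫ u in cc..mm, (NormedSpace.exp ((mm - u) • TA)) (g' u - TA (x' u))‖
      ≤ Θ * Real.exp (σ * (r + ε)) * ((1 - Real.exp (-(lam - σ) * ε)) / (lam - σ))
        * ‖TC‖ * V := by
    have hc3 : (0 : ℝ) ≤ Θ * ‖TC‖ * V * ((1 - Real.exp (-(lam - σ) * ε)) / (lam - σ)) :=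
      mul_nonneg (mul_nonneg (mul_nonneg hΘ.le (norm_nonneg _)) hVnn) hexp2
    calc Real.exp (σ * s) *
        ‖∫ u in cc..mm, (NormedSpace.exp ((mm - u) • TA)) (g' u - TA (x' u))‖
        ≤ Real.exp (σ * s) * (Θ * ‖TC‖ * V * Real.exp (-σ * mm)
            * ((1 - Real.exp (-(lam - σ) * ε)) / (lam - σ))) :=
          mul_le_mul_of_nonneg_left hIbound (Real.exp_pos _).le
      _ = (Real.exp (σ * s) * Real.exp (-σ * mm))
            * (Θ * ‖TC‖ * V * ((1 - Real.exp (-(lam - σ) * ε)) / (lam - σ))) := by ring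
      _ ≤ Real.exp (σ * (r + ε))
            * (Θ * ‖TC‖ * V * ((1 - Real.exp (-(lam - σ) * ε)) / (lam - σ))) := by
          refine mul_le_mul_of_nonneg_right ?_ hc3
          rw [← Real.exp_add]
          refine Real.exp_le_exp.2 ?_
          nlinarith [hσ0.le, hccl, hccm]
      _ = Θ * Real.exp (σ * (r + ε)) * ((1 - Real.exp (-(lam - σ) * ε)) / (lam - σ))
            * ‖TC‖ * V := by ring
  calc Real.exp (σ * s) * ‖v s‖ = Real.exp (σ * s) * ‖x' mm - x' cc‖ := by rw [hvs_eq]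
    _ ≤ Real.exp (σ * s) *
        (‖(NormedSpace.exp ((mm - cc) • TA)) (x' cc) - x' cc‖
          + ‖∫ u in cc..mm, (NormedSpace.exp ((mm - u) • TA)) (g' u - TA (x' u))‖) := by
        refine mul_le_mul_of_nonneg_left ?_ (Real.exp_pos _).le
        rw [hvc]
        exact norm_add_le _ _
    _ = Real.exp (σ * s) * ‖(NormedSpace.exp ((mm - cc) • TA)) (x' cc) - x' cc‖
        + Real.exp (σ * s) *
          ‖∫ u in cc..mm, (NormedSpace.exp ((mm - u) • TA)) (g' u - TA (x' u))‖ :=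
        mul_add _ _ _
    _ ≤ Real.exp (σ * (r + ε)) * (Real.exp (opNorm A * ε) - 1) * X
        + Θ * Real.exp (σ * (r + ε)) * ((1 - Real.exp (-(lam - σ) * ε)) / (lam - σ))
          * opNorm C * V := by
        rw [hopC]
        exact add_le_add hterm1 hterm2
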